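/- For every integer n ≥ 3, ε_Δ(OP_n) = 0 if and only if n ≡ 0 (mod 3); that is, there exists a triangle decomposable maximal outerplanar graph of order n if and only if 3 divides n. -/

import Mathlib

/-- A triangle on three distinct vertices, as a multiset of edges. -/
def IsTriangle {V : Type*} (t : Multiset (Sym2 V)) : Prop :=
  ∃ a b c : V, a ≠ b ∧ b ≠ c ∧ a ≠ c ∧ t = {s(a, b), s(b, c), s(a, c)}

/-- A multigraph (multiset of edges) is triangle decomposable if it is a sum of triangles. -/
def TriDecomp {V : Type*} (E : Multiset (Sym2 V)) : Prop :=
  ∃ T : Multiset (Multiset (Sym2 V)), (∀ t ∈ T, IsTriangle t) ∧ T.sum = E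

/-- The edge multiset of a simple graph on a finite vertex type. -/
noncomputable def edgeMS {V : Type*} [Fintype V] (G : SimpleGraph V) : Multiset (Sym2 V) :=
  G.edgeSet.toFinite.toFinset.val

/-- `ε_Δ(G)`: the least number of duplicated edges of `G` (a multiset of edges of `G`,
repetitions allowed) whose addition makes the edge multiset triangle decomposable. -/
noncomputable def epsDelta {V : Type*} [Fintype V] (G : SimpleGraph V) : ℕ :=
  sInf {k | ∃ D : Multiset (Sym2 V), D.card = k ∧ (∀ e ∈ D, e ∈ G.edgeSet) ∧
    TriDecomp (edgeMS G + D)}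

/-- The edge set of the simple-clique 2-tree construction on `Fin n`: start with the
triangle on `0,1,2`, and each vertex `k ≥ 3` is attached to the two vertices `a k, b k`. -/
def mopEdges (n : ℕ) (hn : 3 ≤ n) (a b : Fin n → Fin n) : Set (Sym2 (Fin n)) :=
  {e | e = s(⟨0, by omega⟩, ⟨1, by omega⟩) ∨ e = s(⟨1, by omega⟩, ⟨2, by omega⟩) ∨
       e = s(⟨0, by omega⟩, ⟨2, by omega⟩) ∨
       ∃ k : Fin n, 3 ≤ (k : ℕ) ∧ (e = s(k, a k) ∨ e = s(k, b k))}

/-- `G` is a maximal outerplanar graph (equivalently, a simple-clique 2-tree):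
it is built from a triangle by repeatedly adding a new vertex adjacent to exactly the two
endpoints of an existing edge, each edge being used as an attachment edge at most once. -/
def IsMOP {n : ℕ} (G : SimpleGraph (Fin n)) : Prop :=
  ∃ (hn : 3 ≤ n) (a b : Fin n → Fin n),
    (∀ k : Fin n, 3 ≤ (k : ℕ) → (a k : ℕ) < k ∧ (b k : ℕ) < k ∧ a k ≠ b k) ∧
    (∀ k : Fin n, 3 ≤ (k : ℕ) → s(a k, b k) ∈ mopEdges n hn a b) ∧
    (∀ k l : Fin n, 3 ≤ (k : ℕ) → 3 ≤ (l : ℕ) → k ≠ l → s(a k, b k) ≠ s(a l, b l)) ∧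
    G = SimpleGraph.fromEdgeSet (mopEdges n hn a b)

/-- `ε_Δ(OP_n) = min { ε_Δ(G) : G a maximal outerplanar graph of order n }`. -/
noncomputable def epsOP (n : ℕ) : ℕ :=
  sInf {m | ∃ G : SimpleGraph (Fin n), IsMOP G ∧ epsDelta G = m}

-- helper lemmas
lemma card_sum_multiset {α : Type*} (s : Multiset (Multiset α)) :
    s.sum.card = (s.map Multiset.card).sum := by
  induction s using Multiset.induction with
  | empty => simp
  | cons a s ih => simp [ih]

lemma mem_sum_of_mem {α : Type*} {S : Multiset (Multiset α)} {t : Multiset α} (ht : t ∈ S)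
    {e : α} (he : e ∈ t) : e ∈ S.sum := by
  induction S using Multiset.induction with
  | empty => simp at ht
  | cons a S ih =>
    rcases Multiset.mem_cons.1 ht with rfl | ht'
    · rw [Multiset.sum_cons]; exact Multiset.mem_add.2 (Or.inl he)
    · rw [Multiset.sum_cons]; exact Multiset.mem_add.2 (Or.inr (ih ht'))

lemma map_sum_eq_bind {α β : Type*} (s : Multiset α) (f : α → Multiset β) :
    (s.map f).sum = s.bind f := rfl

lemma tri_card {V : Type*} {t : Multiset (Sym2 V)} (h : IsTriangle t) : t.card = 3 := by
  obtain ⟨a, b, c, _, _, _, rfl⟩ := h; rfl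

lemma tridecomp_dvd_card {V : Type*} {E : Multiset (Sym2 V)} (h : TriDecomp E) : 3 ∣ E.card := by
  obtain ⟨T, hT, rfl⟩ := h
  rw [card_sum_multiset, Multiset.map_congr rfl (fun t ht => tri_card (hT t ht))]
  simp [Multiset.map_const', Multiset.sum_replicate, Nat.mul_comm]

lemma sym2_max_eq {n : ℕ} {p q r s : Fin n} (h1 : (q : ℕ) < p) (h2 : (s : ℕ) < r) :
    s(p, q) = s(r, s) ↔ p = r ∧ q = s := by
  rw [Sym2.eq_iff]
  constructor
  · rintro (⟨h, h'⟩ | ⟨h, h'⟩)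
    · exact ⟨h, h'⟩
    · subst h; subst h'; omega
  · tauto

lemma triple_rev {α : Type*} (x y z : α) : ({x, y, z} : Multiset α) = {z, y, x} := by
  show x ::ₘ y ::ₘ z ::ₘ 0 = z ::ₘ y ::ₘ x ::ₘ 0
  rw [Multiset.cons_swap x y, Multiset.cons_swap x z, Multiset.cons_swap y z]

section EMsec
variable {n : ℕ} (hn : 3 ≤ n) (a b : Fin n → Fin n)

/-- The canonical edge multiset of the construction. -/
noncomputable def EM : Multiset (Sym2 (Fin n)) :=
  {s(⟨0, by omega⟩, ⟨1, by omega⟩), s(⟨1, by omega⟩, ⟨2, by omega⟩),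
   s(⟨0, by omega⟩, ⟨2, by omega⟩)} +
  (Finset.univ.filter fun k : Fin n => 3 ≤ (k : ℕ)).val.bind fun k => {s(k, a k), s(k, b k)}

variable (Hab : ∀ k : Fin n, 3 ≤ (k : ℕ) → (a k : ℕ) < k ∧ (b k : ℕ) < k ∧ a k ≠ b k)

lemma mem_EM {e : Sym2 (Fin n)} : e ∈ EM hn a b ↔ e ∈ mopEdges n hn a b := by
  simp only [EM, mopEdges, Multiset.mem_add, Multiset.mem_bind, Finset.mem_val,
    Finset.mem_filter, Finset.mem_univ, true_and, Multiset.insert_eq_cons, Multiset.mem_cons,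
    Multiset.mem_singleton, Set.mem_setOf_eq]
  constructor
  · rintro ((h|h|h) | ⟨k, hk, h|h⟩)
    · exact Or.inl h
    · exact Or.inr (Or.inl h)
    · exact Or.inr (Or.inr (Or.inl h))
    · exact Or.inr (Or.inr (Or.inr ⟨k, hk, Or.inl h⟩))
    · exact Or.inr (Or.inr (Or.inr ⟨k, hk, Or.inr h⟩))
  · rintro (h|h|h| ⟨k, hk, h|h⟩)
    · exact Or.inl (Or.inl h)
    · exact Or.inl (Or.inr (Or.inl h))
    · exact Or.inl (Or.inr (Or.inr h))
    · exact Or.inr ⟨k, hk, Or.inl h⟩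
    · exact Or.inr ⟨k, hk, Or.inr h⟩

include Hab in
lemma nodup_EM : (EM hn a b).Nodup := by
  rw [EM, Multiset.nodup_add]
  refine ⟨?_, ?_, ?_⟩
  · simp only [Multiset.insert_eq_cons, Multiset.nodup_cons, Multiset.mem_cons,
      Multiset.mem_singleton, Multiset.nodup_singleton, and_true]
    constructor
    · rintro (h | h) <;> rw [Sym2.eq_iff] at h <;>
        rcases h with ⟨h1, h2⟩ | ⟨h1, h2⟩ <;> simp [Fin.ext_iff] at h1 h2
    · rintro h; rw [Sym2.eq_iff] at h
      rcases h with ⟨h1, h2⟩ | ⟨h1, h2⟩ <;> simp [Fin.ext_iff] at h1 h2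
  · rw [Multiset.nodup_bind]
    constructor
    · intro k hk
      simp only [Finset.mem_val, Finset.mem_filter] at hk
      obtain ⟨hak, hbk, hab⟩ := Hab k hk.2
      simp only [Multiset.insert_eq_cons, Multiset.nodup_cons, Multiset.mem_singleton,
        Multiset.nodup_singleton, and_true]
      intro h
      rcases Sym2.eq_iff.1 h with ⟨_, h2⟩ | ⟨h1, h2⟩
      · exact hab h2
      · rw [← h2] at hak; rw [Fin.ext_iff] at h1; omega
    · refine Multiset.Nodup.pairwise ?_ (Finset.nodup _)
      intro k hk l hl hkl
      simp only [Finset.mem_val, Finset.mem_filter] at hk hl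
      obtain ⟨hak, hbk, _⟩ := Hab k hk.2
      obtain ⟨hal, hbl, _⟩ := Hab l hl.2
      simp only [Function.onFun, Multiset.disjoint_left]
      intro e he he'
      simp only [Multiset.insert_eq_cons, Multiset.mem_cons, Multiset.mem_singleton] at he he'
      rcases he with rfl | rfl <;> rcases he' with h | h <;>
        exact hkl ((sym2_max_eq (by omega) (by omega)).1 h).1
  · -- disjointness of base triangle and attachment edges
    rw [Multiset.disjoint_left]
    intro e he he'
    simp only [Multiset.insert_eq_cons, Multiset.mem_cons, Multiset.mem_singleton] at he
    rw [Multiset.mem_bind] at he'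
    obtain ⟨k, hk, hek⟩ := he'
    simp only [Finset.mem_val, Finset.mem_filter] at hk
    obtain ⟨hak, hbk, _⟩ := Hab k hk.2
    simp only [Multiset.insert_eq_cons, Multiset.mem_cons, Multiset.mem_singleton] at hek
    rcases he with rfl | rfl | rfl <;> rcases hek with h | h <;>
      rcases Sym2.eq_iff.1 h with ⟨h1, h2⟩ | ⟨h1, h2⟩ <;>
      rw [Fin.ext_iff] at h1 h2 <;> simp at h1 h2 <;> omega

include Hab in
lemma nondiag_mop {e : Sym2 (Fin n)} (he : e ∈ mopEdges n hn a b) : ¬ e.IsDiag := by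
  rcases he with h | h | h | ⟨k, hk, h | h⟩ <;> subst h <;> rw [Sym2.mk_isDiag_iff]
  · simp [Fin.ext_iff]
  · simp [Fin.ext_iff]
  · simp [Fin.ext_iff]
  · obtain ⟨h1, -, -⟩ := Hab k hk; intro h; rw [← h] at h1; omega
  · obtain ⟨-, h1, -⟩ := Hab k hk; intro h; rw [← h] at h1; omega

include Hab in
lemma edgeMS_eq_EM : edgeMS (SimpleGraph.fromEdgeSet (mopEdges n hn a b)) = EM hn a b := by
  unfold edgeMS
  rw [Multiset.Nodup.ext (Finset.nodup _) (nodup_EM hn a b Hab)]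
  intro e
  rw [Finset.mem_val, Set.Finite.mem_toFinset, SimpleGraph.edgeSet_fromEdgeSet,
    Set.mem_diff, mem_EM]
  constructor
  · exact fun h => h.1
  · exact fun h => ⟨h, nondiag_mop hn a b Hab h⟩

lemma card_EM : (EM hn a b).card = 2 * n - 3 := by
  have hfil : (Finset.univ.filter fun k : Fin n => 3 ≤ (k : ℕ)).card = n - 3 := by
    rw [← Finset.card_image_of_injective _ Fin.val_injective]
    have himg : (Finset.univ.filter fun k : Fin n => 3 ≤ (k : ℕ)).image Fin.val
        = Finset.Ico 3 n := by
      ext x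
      simp only [Finset.mem_image, Finset.mem_filter, Finset.mem_univ, true_and,
        Finset.mem_Ico]
      constructor
      · rintro ⟨k, hk, rfl⟩; exact ⟨hk, k.isLt⟩
      · rintro ⟨h3, hx⟩; exact ⟨⟨x, hx⟩, h3, rfl⟩
    rw [himg, Nat.card_Ico]
  rw [EM, Multiset.card_add, Multiset.card_bind]
  have : ((Finset.univ.filter fun k : Fin n => 3 ≤ (k : ℕ)).val.map
      (Multiset.card ∘ fun k => ({s(k, a k), s(k, b k)} : Multiset (Sym2 (Fin n))))).sum
      = ((Finset.univ.filter fun k : Fin n => 3 ≤ (k : ℕ)).val.map fun _ => 2).sum := by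
    apply congrArg
    exact Multiset.map_congr rfl (fun k _ => rfl)
  rw [this, Multiset.map_const', Multiset.sum_replicate]
  have : (Finset.univ.filter fun k : Fin n => 3 ≤ (k : ℕ)).val.card = n - 3 := hfil
  rw [this]
  simp only [Multiset.insert_eq_cons, Multiset.card_cons, Multiset.card_singleton,
    smul_eq_mul]
  omega

end EMsec

section MOP
variable {n : ℕ}

/-- Part A: a triangle decomposable MOP forces `3 ∣ n`. -/
lemma mop_tridecomp_dvd {G : SimpleGraph (Fin n)} (hG : IsMOP G)
    (hT : TriDecomp (edgeMS G)) : 3 ∣ n := by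
  obtain ⟨hn, a, b, Hab, -, -, rfl⟩ := hG
  rw [edgeMS_eq_EM hn a b Hab] at hT
  have hc := tridecomp_dvd_card hT
  rw [card_EM] at hc
  omega

/-- The epsDelta set of any MOP is nonempty. -/
lemma mop_epsset_nonempty {G : SimpleGraph (Fin n)} (hG : IsMOP G) :
    {k | ∃ D : Multiset (Sym2 (Fin n)), D.card = k ∧ (∀ e ∈ D, e ∈ G.edgeSet) ∧
      TriDecomp (edgeMS G + D)}.Nonempty := by
  obtain ⟨hn, a, b, Hab, Hmem, -, rfl⟩ := hG
  set KF := (Finset.univ.filter fun k : Fin n => 3 ≤ (k : ℕ)) with hKF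
  refine ⟨_, KF.val.map (fun k => s(a k, b k)), rfl, ?_, ?_⟩
  · intro e he
    rw [Multiset.mem_map] at he
    obtain ⟨k, hk, rfl⟩ := he
    rw [Finset.mem_val, hKF, Finset.mem_filter] at hk
    rw [SimpleGraph.edgeSet_fromEdgeSet, Set.mem_diff]
    refine ⟨Hmem k hk.2, ?_⟩
    rw [Sym2.mem_diagSet, Sym2.mk_isDiag_iff]
    exact (Hab k hk.2).2.2
  · refine ⟨({s((⟨0, by omega⟩ : Fin n), (⟨1, by omega⟩ : Fin n)),
        s((⟨1, by omega⟩ : Fin n), (⟨2, by omega⟩ : Fin n)),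
        s((⟨0, by omega⟩ : Fin n), (⟨2, by omega⟩ : Fin n))} : Multiset (Sym2 (Fin n))) ::ₘ
        KF.val.map (fun k => ({s(a k, b k), s(b k, k), s(a k, k)} : Multiset (Sym2 (Fin n)))),
      ?_, ?_⟩
    · intro t ht
      rcases Multiset.mem_cons.1 ht with rfl | ht'
      · exact ⟨_, _, _, by simp [Fin.ext_iff], by simp [Fin.ext_iff], by simp [Fin.ext_iff], rfl⟩
      · rw [Multiset.mem_map] at ht'
        obtain ⟨k, hk, rfl⟩ := ht'
        rw [Finset.mem_val, hKF, Finset.mem_filter] at hk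
        obtain ⟨h1, h2, h3⟩ := Hab k hk.2
        refine ⟨a k, b k, k, h3, ?_, ?_, rfl⟩
        · intro h; rw [Fin.ext_iff] at h; omega
        · intro h; rw [Fin.ext_iff] at h; omega
    · rw [Multiset.sum_cons, edgeMS_eq_EM hn a b Hab, EM, map_sum_eq_bind]
      rw [add_assoc]
      apply congrArg
      have h1 : KF.val.map (fun k => s(a k, b k))
          = KF.val.bind (fun k => ({s(a k, b k)} : Multiset (Sym2 (Fin n)))) :=
        (Multiset.bind_singleton _ _).symm
      rw [h1, ← Multiset.bind_add]
      refine Multiset.bind_congr (fun k hk => ?_)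
      rw [Finset.mem_val, hKF, Finset.mem_filter] at hk
      rw [show s(b k, k) = s(k, b k) from Sym2.eq_swap,
        show s(a k, k) = s(k, a k) from Sym2.eq_swap, triple_rev]
      rfl

lemma epsDelta_zero_iff {G : SimpleGraph (Fin n)} (hG : IsMOP G) :
    epsDelta G = 0 ↔ TriDecomp (edgeMS G) := by
  unfold epsDelta
  rw [Nat.sInf_eq_zero]
  constructor
  · rintro (h0 | hempty)
    · obtain ⟨D, hcard, -, hdec⟩ := h0
      rw [Multiset.card_eq_zero] at hcard
      subst hcard
      simpa using hdec
    · exact absurd (Set.eq_empty_iff_forall_notMem.1 hempty) (by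
        obtain ⟨x, hx⟩ := mop_epsset_nonempty hG
        intro h; exact h x hx)
  · intro h
    exact Or.inl ⟨0, rfl, by simp, by simpa⟩

/-- The fan is a MOP, for every `n ≥ 3`. -/
lemma fan_mop (hn : 3 ≤ n) :
    IsMOP (SimpleGraph.fromEdgeSet (mopEdges n hn
      (fun k => ⟨(k : ℕ) - 1, by have := k.isLt; omega⟩)
      (fun k => ⟨(k : ℕ) - 2, by have := k.isLt; omega⟩))) := by
  refine ⟨hn, _, _, ?_, ?_, ?_, rfl⟩
  · intro k hk
    refine ⟨by simp; omega, by simp; omega, ?_⟩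
    intro h; rw [Fin.ext_iff] at h; simp at h; omega
  · intro k hk
    by_cases h3 : (k : ℕ) = 3
    · refine Or.inr (Or.inl ?_)
      rw [Sym2.eq_iff]
      right
      constructor <;> rw [Fin.ext_iff] <;> simp <;> omega
    · refine Or.inr (Or.inr (Or.inr ⟨⟨(k : ℕ) - 1, by have := k.isLt; omega⟩, by simp; omega,
        Or.inl ?_⟩))
      rw [Sym2.eq_iff]
      left
      constructor <;> rw [Fin.ext_iff] <;> simp <;> omega
  · intro k l hk hl hkl h
    rw [Sym2.eq_iff] at h
    apply hkl
    rw [Fin.ext_iff]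
    rcases h with ⟨h1, h2⟩ | ⟨h1, h2⟩ <;> rw [Fin.ext_iff] at h1 h2 <;> simp at h1 h2 <;> omega

end MOP

section Construction

def vtx (n : ℕ) (h : 0 < n) (x : ℕ) : Fin n := ⟨x % n, Nat.mod_lt _ h⟩

lemma vtx_val {n : ℕ} (h : 0 < n) {x : ℕ} (hx : x < n) : (vtx n h x : ℕ) = x :=
  Nat.mod_eq_of_lt hx

lemma sym2_vtx_eq {n : ℕ} (h : 0 < n) {x y : Fin n} {p q : ℕ} (hp : p < n) (hq : q < n)
    (hx : (x : ℕ) = p) (hy : (y : ℕ) = q) :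
    s(x, y) = s(vtx n h p, vtx n h q) := by
  rw [Sym2.eq_iff]
  left
  exact ⟨Fin.ext (by rw [hx, vtx_val h hp]), Fin.ext (by rw [hy, vtx_val h hq])⟩

def cA (n : ℕ) : Fin n → Fin n := fun k =>
  ⟨if (k : ℕ) % 3 = 0 then (k : ℕ) - 3 else if (k : ℕ) % 3 = 1 then (k : ℕ) - 1
    else (k : ℕ) - 2, by have := k.isLt; split_ifs <;> omega⟩

def cB (n : ℕ) : Fin n → Fin n := fun k =>
  ⟨if (k : ℕ) % 3 = 0 then (k : ℕ) - 2 else (k : ℕ) - 4,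
   by have := k.isLt; split_ifs <;> omega⟩

lemma cA_val {n : ℕ} (k : Fin n) : (cA n k : ℕ)
    = if (k : ℕ) % 3 = 0 then (k : ℕ) - 3 else if (k : ℕ) % 3 = 1 then (k : ℕ) - 1
      else (k : ℕ) - 2 := rfl

lemma cB_val {n : ℕ} (k : Fin n) : (cB n k : ℕ)
    = if (k : ℕ) % 3 = 0 then (k : ℕ) - 2 else (k : ℕ) - 4 := rfl

lemma c_Hab {n : ℕ} : ∀ k : Fin n, 3 ≤ (k : ℕ) →
    (cA n k : ℕ) < k ∧ (cB n k : ℕ) < k ∧ cA n k ≠ cB n k := by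
  intro k hk
  refine ⟨?_, ?_, ?_⟩
  · rw [cA_val]; split_ifs <;> omega
  · rw [cB_val]; split_ifs <;> omega
  · intro h
    rw [Fin.ext_iff, cA_val, cB_val] at h
    split_ifs at h <;> omega

lemma c_mem {n : ℕ} (hn : 3 ≤ n) : ∀ k : Fin n, 3 ≤ (k : ℕ) →
    s(cA n k, cB n k) ∈ mopEdges n hn (cA n) (cB n) := by
  intro k hk
  have hkn := k.isLt
  by_cases h0 : (k : ℕ) % 3 = 0
  · by_cases h3 : (k : ℕ) = 3
    · -- attachment edge (0,1), the first base edge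
      refine Or.inl ?_
      rw [Sym2.eq_iff]
      left
      constructor <;> rw [Fin.ext_iff] <;> simp [cA_val, cB_val, h3]
    · -- k ≥ 6 : edge s(k-2, cA (k-2)) reversed
      have h6 : 6 ≤ (k : ℕ) := by omega
      refine Or.inr (Or.inr (Or.inr ⟨⟨(k : ℕ) - 2, by omega⟩, by simp; omega, Or.inl ?_⟩))
      rw [Sym2.eq_iff]
      right
      constructor <;> rw [Fin.ext_iff] <;> simp only [cA_val, cB_val] <;> first | (split_ifs <;> omega) | omega
  · by_cases h1 : (k : ℕ) % 3 = 1
    · -- edge s(k-1, cA (k-1))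
      refine Or.inr (Or.inr (Or.inr ⟨⟨(k : ℕ) - 1, by omega⟩, by simp; omega, Or.inl ?_⟩))
      rw [Sym2.eq_iff]
      left
      constructor <;> rw [Fin.ext_iff] <;> simp only [cA_val, cB_val] <;> first | (split_ifs <;> omega) | omega
    · -- k % 3 = 2 : edge s(k-2, cB (k-2))
      refine Or.inr (Or.inr (Or.inr ⟨⟨(k : ℕ) - 2, by omega⟩, by simp; omega, Or.inr ?_⟩))
      rw [Sym2.eq_iff]
      left
      constructor <;> rw [Fin.ext_iff] <;> simp only [cA_val, cB_val] <;> first | (split_ifs <;> omega) | omega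

lemma c_inj {n : ℕ} : ∀ k l : Fin n, 3 ≤ (k : ℕ) → 3 ≤ (l : ℕ) → k ≠ l →
    s(cA n k, cB n k) ≠ s(cA n l, cB n l) := by
  intro k l hk hl hkl h
  have hne : (k : ℕ) ≠ (l : ℕ) := fun h' => hkl (Fin.ext h')
  rw [Sym2.eq_iff] at h
  rcases h with ⟨h1, h2⟩ | ⟨h1, h2⟩ <;>
    rw [Fin.ext_iff] at h1 h2 <;>
    simp only [cA_val, cB_val] at h1 h2 <;>
    split_ifs at h1 h2 <;> omega

lemma c_mop {n : ℕ} (hn : 3 ≤ n) :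
    IsMOP (SimpleGraph.fromEdgeSet (mopEdges n hn (cA n) (cB n))) :=
  ⟨hn, cA n, cB n, c_Hab, c_mem hn, c_inj, rfl⟩

end Construction

section Decomp
variable {n : ℕ}

/-- The triangle family for the construction, `n = 3m`. -/
def TT (n : ℕ) (hn : 3 ≤ n) (m : ℕ) : Multiset (Multiset (Sym2 (Fin n))) :=
  ({s((⟨0, by omega⟩ : Fin n), (⟨1, by omega⟩ : Fin n)),
    s((⟨1, by omega⟩ : Fin n), (⟨2, by omega⟩ : Fin n)),
    s((⟨0, by omega⟩ : Fin n), (⟨2, by omega⟩ : Fin n))} : Multiset (Sym2 (Fin n))) ::ₘ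
  (Finset.Ico 1 m).val.bind (fun j =>
    {({s(vtx n (by omega) (3*j+1), vtx n (by omega) (3*j)),
       s(vtx n (by omega) (3*j), vtx n (by omega) (3*j-3)),
       s(vtx n (by omega) (3*j+1), vtx n (by omega) (3*j-3))} : Multiset (Sym2 (Fin n))),
     ({s(vtx n (by omega) (3*j+2), vtx n (by omega) (3*j)),
       s(vtx n (by omega) (3*j), vtx n (by omega) (3*j-2)),
       s(vtx n (by omega) (3*j+2), vtx n (by omega) (3*j-2))} : Multiset (Sym2 (Fin n)))})

lemma TT_card (hn : 3 ≤ n) (m : ℕ) : (TT n hn m).sum.card = 3 + (m - 1) * 6 := by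
  rw [card_sum_multiset, TT, Multiset.map_cons, Multiset.map_bind, Multiset.sum_cons,
    Multiset.sum_bind]
  have : ∀ j ∈ (Finset.Ico 1 m).val,
      (Multiset.map Multiset.card
        ({({s(vtx n (by omega : 0 < n) (3*j+1), vtx n (by omega) (3*j)),
           s(vtx n (by omega) (3*j), vtx n (by omega) (3*j-3)),
           s(vtx n (by omega) (3*j+1), vtx n (by omega) (3*j-3))} : Multiset (Sym2 (Fin n))),
         ({s(vtx n (by omega) (3*j+2), vtx n (by omega) (3*j)),
           s(vtx n (by omega) (3*j), vtx n (by omega) (3*j-2)),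
           s(vtx n (by omega) (3*j+2), vtx n (by omega) (3*j-2))} : Multiset (Sym2 (Fin n)))}
          : Multiset (Multiset (Sym2 (Fin n))))).sum = 6 := fun j _ => rfl
  rw [Multiset.map_congr rfl this, Multiset.map_const', Multiset.sum_replicate]
  simp [Nat.card_Ico]

lemma TT_istri (hn : 3 ≤ n) {m : ℕ} (hm : n = 3 * m) :
    ∀ t ∈ TT n hn m, IsTriangle t := by
  intro t ht
  rcases Multiset.mem_cons.1 ht with rfl | ht'
  · exact ⟨_, _, _, by simp [Fin.ext_iff], by simp [Fin.ext_iff], by simp [Fin.ext_iff], rfl⟩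
  · rw [Multiset.mem_bind] at ht'
    obtain ⟨j, hj, ht2⟩ := ht'
    rw [Finset.mem_val, Finset.mem_Ico] at hj
    have hb : 3*j + 2 < n := by omega
    have hpos : 0 < n := by omega
    rcases Multiset.mem_cons.1 ht2 with rfl | ht3
    · refine ⟨_, _, _, ?_, ?_, ?_, rfl⟩ <;>
        (intro h; rw [Fin.ext_iff, vtx_val hpos (by omega), vtx_val hpos (by omega)] at h;
          omega)
    · rw [Multiset.mem_singleton] at ht3
      subst ht3
      refine ⟨_, _, _, ?_, ?_, ?_, rfl⟩ <;>
        (intro h; rw [Fin.ext_iff, vtx_val hpos (by omega), vtx_val hpos (by omega)] at h;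
          omega)

lemma TT_mem (hn : 3 ≤ n) {m : ℕ} (hm : n = 3 * m) :
    ∀ e ∈ EM hn (cA n) (cB n), e ∈ (TT n hn m).sum := by
  have hpos : 0 < n := by omega
  intro e he
  rw [mem_EM] at he
  have hbase : ∀ x ∈ ({s((⟨0, by omega⟩ : Fin n), (⟨1, by omega⟩ : Fin n)),
      s((⟨1, by omega⟩ : Fin n), (⟨2, by omega⟩ : Fin n)),
      s((⟨0, by omega⟩ : Fin n), (⟨2, by omega⟩ : Fin n))} : Multiset (Sym2 (Fin n))),
      x ∈ (TT n hn m).sum := fun x hx =>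
    mem_sum_of_mem (Multiset.mem_cons_self _ _) hx
  rcases he with h | h | h | ⟨k, hk, h | h⟩
  · exact h ▸ hbase _ (by simp)
  · exact h ▸ hbase _ (by simp)
  · exact h ▸ hbase _ (by simp)
  · -- e = s(k, cA k)
    subst h
    have hkn := k.isLt
    set j := (k : ℕ) / 3 with hj
    have hjm : 1 ≤ j ∧ j < m := by constructor <;> omega
    have hjmem : (({({s(vtx n (by omega : 0 < n) (3*j+1), vtx n (by omega) (3*j)),
       s(vtx n (by omega) (3*j), vtx n (by omega) (3*j-3)),
       s(vtx n (by omega) (3*j+1), vtx n (by omega) (3*j-3))} : Multiset (Sym2 (Fin n))),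
     ({s(vtx n (by omega) (3*j+2), vtx n (by omega) (3*j)),
       s(vtx n (by omega) (3*j), vtx n (by omega) (3*j-2)),
       s(vtx n (by omega) (3*j+2), vtx n (by omega) (3*j-2))} : Multiset (Sym2 (Fin n)))})
        : Multiset (Multiset (Sym2 (Fin n)))) ⊆ TT n hn m := by
      intro t ht
      rw [TT]
      refine Multiset.mem_cons_of_mem (Multiset.mem_bind.2 ⟨j, ?_, ht⟩)
      rw [Finset.mem_val, Finset.mem_Ico]
      omega
    have h0 : (k : ℕ) % 3 = 0 ∨ (k : ℕ) % 3 = 1 ∨ (k : ℕ) % 3 = 2 := by omega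
    rcases h0 with h0 | h0 | h0
    · -- elt 2 of T1 j : s(vtx 3j, vtx (3j-3))
      have : s(k, cA n k) = s(vtx n hpos (3*j), vtx n hpos (3*j-3)) :=
        sym2_vtx_eq hpos (by omega) (by omega) (by omega) (by rw [cA_val]; split_ifs <;> omega)
      rw [this]
      refine mem_sum_of_mem
        (t := ({s(vtx n hpos (3*j+1), vtx n hpos (3*j)), s(vtx n hpos (3*j), vtx n hpos (3*j-3)),
            s(vtx n hpos (3*j+1), vtx n hpos (3*j-3))} : Multiset (Sym2 (Fin n))))
        (hjmem ?_) ?_ <;> simp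
    · -- elt 1 of T1 j : s(vtx (3j+1), vtx 3j)
      have : s(k, cA n k) = s(vtx n hpos (3*j+1), vtx n hpos (3*j)) :=
        sym2_vtx_eq hpos (by omega) (by omega) (by omega) (by rw [cA_val]; split_ifs <;> omega)
      rw [this]
      refine mem_sum_of_mem
        (t := ({s(vtx n hpos (3*j+1), vtx n hpos (3*j)), s(vtx n hpos (3*j), vtx n hpos (3*j-3)),
            s(vtx n hpos (3*j+1), vtx n hpos (3*j-3))} : Multiset (Sym2 (Fin n))))
        (hjmem ?_) ?_ <;> simp
    · -- elt 1 of T2 j : s(vtx (3j+2), vtx 3j)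
      have : s(k, cA n k) = s(vtx n hpos (3*j+2), vtx n hpos (3*j)) :=
        sym2_vtx_eq hpos (by omega) (by omega) (by omega) (by rw [cA_val]; split_ifs <;> omega)
      rw [this]
      refine mem_sum_of_mem
        (t := ({s(vtx n hpos (3*j+2), vtx n hpos (3*j)), s(vtx n hpos (3*j), vtx n hpos (3*j-2)),
            s(vtx n hpos (3*j+2), vtx n hpos (3*j-2))} : Multiset (Sym2 (Fin n))))
        (hjmem ?_) ?_ <;> simp
  · -- e = s(k, cB k)
    subst h
    have hkn := k.isLt
    set j := (k : ℕ) / 3 with hj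
    have hjm : 1 ≤ j ∧ j < m := by constructor <;> omega
    have hjmem : (({({s(vtx n (by omega : 0 < n) (3*j+1), vtx n (by omega) (3*j)),
       s(vtx n (by omega) (3*j), vtx n (by omega) (3*j-3)),
       s(vtx n (by omega) (3*j+1), vtx n (by omega) (3*j-3))} : Multiset (Sym2 (Fin n))),
     ({s(vtx n (by omega) (3*j+2), vtx n (by omega) (3*j)),
       s(vtx n (by omega) (3*j), vtx n (by omega) (3*j-2)),
       s(vtx n (by omega) (3*j+2), vtx n (by omega) (3*j-2))} : Multiset (Sym2 (Fin n)))})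
        : Multiset (Multiset (Sym2 (Fin n)))) ⊆ TT n hn m := by
      intro t ht
      rw [TT]
      refine Multiset.mem_cons_of_mem (Multiset.mem_bind.2 ⟨j, ?_, ht⟩)
      rw [Finset.mem_val, Finset.mem_Ico]
      omega
    have h0 : (k : ℕ) % 3 = 0 ∨ (k : ℕ) % 3 = 1 ∨ (k : ℕ) % 3 = 2 := by omega
    rcases h0 with h0 | h0 | h0
    · -- elt 2 of T2 j : s(vtx 3j, vtx (3j-2))
      have : s(k, cB n k) = s(vtx n hpos (3*j), vtx n hpos (3*j-2)) :=
        sym2_vtx_eq hpos (by omega) (by omega) (by omega) (by rw [cB_val]; split_ifs <;> omega)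
      rw [this]
      refine mem_sum_of_mem
        (t := ({s(vtx n hpos (3*j+2), vtx n hpos (3*j)), s(vtx n hpos (3*j), vtx n hpos (3*j-2)),
            s(vtx n hpos (3*j+2), vtx n hpos (3*j-2))} : Multiset (Sym2 (Fin n))))
        (hjmem ?_) ?_ <;> simp
    · -- elt 3 of T1 j : s(vtx (3j+1), vtx (3j-3))
      have : s(k, cB n k) = s(vtx n hpos (3*j+1), vtx n hpos (3*j-3)) :=
        sym2_vtx_eq hpos (by omega) (by omega) (by omega) (by rw [cB_val]; split_ifs <;> omega)
      rw [this]
      refine mem_sum_of_mem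
        (t := ({s(vtx n hpos (3*j+1), vtx n hpos (3*j)), s(vtx n hpos (3*j), vtx n hpos (3*j-3)),
            s(vtx n hpos (3*j+1), vtx n hpos (3*j-3))} : Multiset (Sym2 (Fin n))))
        (hjmem ?_) ?_ <;> simp
    · -- elt 3 of T2 j : s(vtx (3j+2), vtx (3j-2))
      have : s(k, cB n k) = s(vtx n hpos (3*j+2), vtx n hpos (3*j-2)) :=
        sym2_vtx_eq hpos (by omega) (by omega) (by omega) (by rw [cB_val]; split_ifs <;> omega)
      rw [this]
      refine mem_sum_of_mem
        (t := ({s(vtx n hpos (3*j+2), vtx n hpos (3*j)), s(vtx n hpos (3*j), vtx n hpos (3*j-2)),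
            s(vtx n hpos (3*j+2), vtx n hpos (3*j-2))} : Multiset (Sym2 (Fin n))))
        (hjmem ?_) ?_ <;> simp

lemma c_tridecomp (hn : 3 ≤ n) (hd : 3 ∣ n) :
    TriDecomp (edgeMS (SimpleGraph.fromEdgeSet (mopEdges n hn (cA n) (cB n)))) := by
  obtain ⟨m, hm⟩ := hd
  rw [edgeMS_eq_EM hn _ _ c_Hab]
  refine ⟨TT n hn m, TT_istri hn hm, ?_⟩
  have hle : EM hn (cA n) (cB n) ≤ (TT n hn m).sum :=
    (Multiset.le_iff_subset (nodup_EM hn _ _ c_Hab)).2 (TT_mem hn hm)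
  have hcard : ((TT n hn m).sum).card ≤ (EM hn (cA n) (cB n)).card := by
    rw [TT_card, card_EM]
    omega
  exact (Multiset.eq_of_le_of_card_le hle hcard).symm

end Decomp


/-- For every `n ≥ 3`, `ε_Δ(OP_n) = 0` iff `n ≡ 0 (mod 3)`; that is, a triangle
decomposable maximal outerplanar graph of order `n` exists iff `3 ∣ n`. -/
theorem eps_OP_eq_zero_iff (n : ℕ) (hn : 3 ≤ n) :
    (epsOP n = 0 ↔ n % 3 = 0) ∧
    ((∃ G : SimpleGraph (Fin n), IsMOP G ∧ TriDecomp (edgeMS G)) ↔ 3 ∣ n) := by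
  have hsecond : (∃ G : SimpleGraph (Fin n), IsMOP G ∧ TriDecomp (edgeMS G)) ↔ 3 ∣ n := by
    constructor
    · rintro ⟨G, h1, h2⟩
      exact mop_tridecomp_dvd h1 h2
    · intro hd
      exact ⟨_, c_mop hn, c_tridecomp hn hd⟩
  refine ⟨?_, hsecond⟩
  unfold epsOP
  rw [Nat.sInf_eq_zero]
  constructor
  · rintro (⟨G, hG, h0⟩ | hemp)
    · have := hsecond.1 ⟨G, hG, (epsDelta_zero_iff hG).1 h0⟩
      omega
    · exact absurd hemp (Set.nonempty_iff_ne_empty.1 ⟨_, _, fan_mop hn, rfl⟩)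
  · intro hmod
    obtain ⟨G, h1, h2⟩ := hsecond.2 (by omega)
    exact Or.inl ⟨G, h1, (epsDelta_zero_iff h1).2 h2⟩
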